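/- Let R be a (possibly noncommutative) ring, n ∈ ℕ, and k ∈ {0,1,…,n}. Let A = (a_{i,j})_{i,j ∈ [n]} be an n×n matrix over R such that a_{i,j} = 0 whenever i ∈ {k+1, …, n} and j ∈ {1, …, k} (block lower-left zero). Then rowdet A = rowdet((a_{i,j})_{i,j ∈ [k]}) · rowdet((a_{k+i, k+j})_{i,j ∈ [n-k]}). -/

import Mathlib

open Equiv Finset

def rowdet {R : Type*} [Ring R] {n : ℕ} (A : Matrix (Fin n) (Fin n) R) : R :=
  ∑ σ : Equiv.Perm (Fin n), (Equiv.Perm.sign σ : ℤ) • (List.ofFn fun i => A i (σ i)).prod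

lemma rowdet_cast {R : Type*} [Ring R] {a b : ℕ} (h : b = a) (A : Matrix (Fin a) (Fin a) R) :
    rowdet (Matrix.of fun i j : Fin b => A (Fin.cast h i) (Fin.cast h j)) = rowdet A := by
  subst h; rfl

lemma permCongr_apply_castAdd {k m : ℕ} (σ₁ : Equiv.Perm (Fin k)) (σ₂ : Equiv.Perm (Fin m))
    (i : Fin k) :
    (finSumFinEquiv.permCongr (Equiv.sumCongr σ₁ σ₂)) (Fin.castAdd m i)
      = Fin.castAdd m (σ₁ i) := by
  simp [Equiv.permCongr_apply]

lemma permCongr_apply_natAdd {k m : ℕ} (σ₁ : Equiv.Perm (Fin k)) (σ₂ : Equiv.Perm (Fin m))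
    (i : Fin m) :
    (finSumFinEquiv.permCongr (Equiv.sumCongr σ₁ σ₂)) (Fin.natAdd k i)
      = Fin.natAdd k (σ₂ i) := by
  simp [Equiv.permCongr_apply]

-- products outside the "block-preserving" set vanish
lemma rowdet_key {R : Type*} [Ring R] {k m : ℕ} (A : Matrix (Fin (k+m)) (Fin (k+m)) R)
    (hA : ∀ i j : Fin (k+m), k ≤ (i : ℕ) → (j : ℕ) < k → A i j = 0)
    (σ : Equiv.Perm (Fin (k+m))) (hσ : ¬ ∀ i : Fin (k+m), (i : ℕ) < k → ((σ i : ℕ)) < k) :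
    (List.ofFn fun i => A i (σ i)).prod = 0 := by
  push_neg at hσ
  obtain ⟨i₀, hi₀, hσi₀⟩ := hσ
  have hex : ∃ j : Fin (k+m), k ≤ (j : ℕ) ∧ ((σ j : ℕ)) < k := by
    by_contra h
    push_neg at h
    set T : Finset (Fin (k+m)) := univ.filter (fun j => k ≤ (j : ℕ)) with hT
    have himg : T.image σ = T := by
      apply Finset.eq_of_subset_of_card_le
      · intro x hx
        obtain ⟨j, hj, rfl⟩ := Finset.mem_image.mp hx
        rw [hT, Finset.mem_filter] at hj ⊢
        exact ⟨Finset.mem_univ _, h j hj.2⟩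
      · rw [Finset.card_image_of_injective _ σ.injective]
    have hmem : σ i₀ ∈ T := by rw [hT, Finset.mem_filter]; exact ⟨Finset.mem_univ _, hσi₀⟩
    rw [← himg] at hmem
    obtain ⟨j, hj, hji⟩ := Finset.mem_image.mp hmem
    have : j = i₀ := σ.injective hji
    subst this
    rw [hT, Finset.mem_filter] at hj
    omega
  obtain ⟨j, hj, hσj⟩ := hex
  apply List.prod_eq_zero
  rw [List.mem_ofFn]
  exact ⟨j, hA j (σ j) hj hσj⟩

lemma rowdet_aux {R : Type*} [Ring R] (k m : ℕ) (A : Matrix (Fin (k+m)) (Fin (k+m)) R)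
    (hA : ∀ i j : Fin (k+m), k ≤ (i : ℕ) → (j : ℕ) < k → A i j = 0) :
    rowdet A = rowdet (Matrix.of fun i j : Fin k => A (Fin.castAdd m i) (Fin.castAdd m j))
      * rowdet (Matrix.of fun i j : Fin m => A (Fin.natAdd k i) (Fin.natAdd k j)) := by
  classical
  set P : Equiv.Perm (Fin (k+m)) → Prop := fun σ => ∀ i : Fin (k+m), (i : ℕ) < k → ((σ i : ℕ)) < k
    with hP
  have hsub : rowdet A = ∑ σ ∈ univ.filter P,
      (Equiv.Perm.sign σ : ℤ) • (List.ofFn fun i => A i (σ i)).prod := by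
    rw [rowdet]
    symm
    apply Finset.sum_subset (Finset.subset_univ _)
    intro σ _ hσ
    rw [Finset.mem_filter] at hσ
    have : ¬ P σ := fun h => hσ ⟨Finset.mem_univ _, h⟩
    rw [rowdet_key A hA σ this, smul_zero]
  rw [hsub, rowdet, rowdet, Finset.sum_mul_sum, ← Finset.sum_product', Finset.univ_product_univ]
  symm
  refine Finset.sum_nbij (fun p => finSumFinEquiv.permCongr (Equiv.sumCongr p.1 p.2)) ?_ ?_ ?_ ?_
  · -- maps to filter
    intro p _
    rw [Finset.mem_filter]
    refine ⟨Finset.mem_univ _, ?_⟩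
    intro i hi
    have hi' : i = Fin.castAdd m ⟨(i : ℕ), hi⟩ := rfl
    rw [hi', permCongr_apply_castAdd]
    exact (p.1 ⟨(i : ℕ), hi⟩).isLt
  · -- injective
    intro p _ q _ h
    simp only at h
    ext x
    · have h3 := DFunLike.congr_fun h (Fin.castAdd m x)
      rw [permCongr_apply_castAdd, permCongr_apply_castAdd] at h3
      have hv := congrArg Fin.val h3
      exact hv
    · have h3 := DFunLike.congr_fun h (Fin.natAdd k x)
      rw [permCongr_apply_natAdd, permCongr_apply_natAdd] at h3
      have hv := congrArg Fin.val h3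
      simp only [Fin.coe_natAdd] at hv
      exact Nat.add_left_cancel hv
  · -- surjective
    intro σ hσ
    simp only [Finset.coe_filter, Set.mem_setOf_eq] at hσ
    have hPσ : P σ := hσ.2
    have himg : (univ.filter (fun j : Fin (k+m) => (j : ℕ) < k)).image σ
        = univ.filter (fun j : Fin (k+m) => (j : ℕ) < k) := by
      apply Finset.eq_of_subset_of_card_le
      · intro x hx
        obtain ⟨j, hj, rfl⟩ := Finset.mem_image.mp hx
        rw [Finset.mem_filter] at hj ⊢
        exact ⟨Finset.mem_univ _, hPσ j hj.2⟩
      · rw [Finset.card_image_of_injective _ σ.injective]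
    have hQσ : ∀ i : Fin (k+m), k ≤ (i : ℕ) → k ≤ ((σ i : ℕ)) := by
      intro i hi
      by_contra hc
      push_neg at hc
      have hmem : σ i ∈ univ.filter (fun j : Fin (k+m) => (j : ℕ) < k) :=
        Finset.mem_filter.mpr ⟨Finset.mem_univ _, hc⟩
      rw [← himg] at hmem
      obtain ⟨j, hj, hji⟩ := Finset.mem_image.mp hmem
      cases σ.injective hji
      rw [Finset.mem_filter] at hj
      omega
    have hlt : ∀ i : Fin k, ((σ (Fin.castAdd m i) : ℕ)) < k := fun i => hPσ _ i.isLt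
    have hge : ∀ i : Fin m, k ≤ ((σ (Fin.natAdd k i) : ℕ)) :=
      fun i => hQσ _ (Nat.le_add_right k i)
    set f₁ : Fin k → Fin k := fun i => ⟨(σ (Fin.castAdd m i) : ℕ), hlt i⟩ with hf₁
    set f₂ : Fin m → Fin m := fun i =>
      ⟨(σ (Fin.natAdd k i) : ℕ) - k, by have := (σ (Fin.natAdd k i)).isLt; have := hge i; omega⟩
      with hf₂
    have hinj₁ : Function.Injective f₁ := by
      intro a b h
      have hv := congrArg Fin.val h
      have h5 : σ (Fin.castAdd m a) = σ (Fin.castAdd m b) := Fin.ext hv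
      have h6 := congrArg Fin.val (σ.injective h5)
      simp only [Fin.coe_castAdd] at h6
      exact Fin.ext h6
    have hinj₂ : Function.Injective f₂ := by
      intro a b h
      have hv := congrArg Fin.val h
      simp only [hf₂] at hv
      have h1 := hge a
      have h2 := hge b
      have h5 : σ (Fin.natAdd k a) = σ (Fin.natAdd k b) := Fin.ext (by omega)
      have h6 := congrArg Fin.val (σ.injective h5)
      simp only [Fin.coe_natAdd] at h6
      exact Fin.ext (Nat.add_left_cancel h6)
    refine ⟨(Equiv.ofBijective f₁ (Finite.injective_iff_bijective.mp hinj₁),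
            Equiv.ofBijective f₂ (Finite.injective_iff_bijective.mp hinj₂)), Finset.mem_coe.mpr (Finset.mem_univ _), ?_⟩
    apply Equiv.ext
    intro x
    induction x using Fin.addCases with
    | left i =>
        rw [permCongr_apply_castAdd]
        exact Fin.ext rfl
    | right i =>
        rw [permCongr_apply_natAdd]
        refine Fin.ext ?_
        have := hge i
        simp only [Equiv.ofBijective_apply, hf₂, Fin.natAdd_mk]
        show k + ((σ (Fin.natAdd k i) : ℕ) - k) = _
        omega
  · -- value
    intro p _
    obtain ⟨σ₁, σ₂⟩ := p
    simp only
    rw [List.ofFn_add, List.prod_append]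
    have hc : ∀ (h : k ≤ k + m) (i : Fin k), Fin.castLE h i = Fin.castAdd m i := fun _ _ => rfl
    simp only [hc]
    simp only [permCongr_apply_castAdd, permCongr_apply_natAdd]
    rw [smul_mul_smul_comm]
    congr 1
    rw [Equiv.Perm.sign_permCongr, Equiv.Perm.sign_sumCongr, Units.val_mul]

theorem rowdet_block_triangular (R : Type*) [Ring R] (n k : ℕ) (hk : k ≤ n)
    (A : Matrix (Fin n) (Fin n) R)
    (hA : ∀ i j : Fin n, k ≤ (i : ℕ) → (j : ℕ) < k → A i j = 0) :
    rowdet A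
      = rowdet (Matrix.of fun i j : Fin k => A (Fin.castLE hk i) (Fin.castLE hk j))
        * rowdet (Matrix.of fun i j : Fin (n - k) =>
            A ⟨k + (i : ℕ), by have := i.isLt; omega⟩ ⟨k + (j : ℕ), by have := j.isLt; omega⟩) := by
  obtain ⟨m, rfl⟩ : ∃ m, n = k + m := ⟨n - k, by omega⟩
  rw [rowdet_aux k m A hA]
  congr 1
  have h2 : k + m - k = m := by omega
  exact (rowdet_cast h2 (Matrix.of fun i j : Fin m => A (Fin.natAdd k i) (Fin.natAdd k j))).symm
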